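/- Suppose that conditionally on Λ = λ the random variable N is Poisson with mean βλ (β > 0 fixed), and that P[Λ > λ] = λ^{−α} L(λ) for a slowly varying function L and α > 0, with E[X_1^r] < ∞ and the other tail domination conditions permitting the application of the consistent-variation random sum theorem. Then P[N > x] ~ P[Λ > x/β] = (x/β)^{−α} L(x/β) as x → ∞. -/

import Mathlib

open MeasureTheory ProbabilityTheory Filter Topology ENNReal





noncomputable def ppmf (m : ℝ) (n : ℕ) : ℝ := Real.exp (-m) * m ^ n / n.factorial

lemma ppmf_nonneg {m : ℝ} (hm : 0 ≤ m) (n : ℕ) : 0 ≤ ppmf m n := by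
  unfold ppmf; positivity

lemma tsum_pow_div_factorial (x : ℝ) : ∑' n : ℕ, x ^ n / n.factorial = Real.exp x := by
  rw [Real.exp_eq_exp_ℝ, NormedSpace.exp_eq_tsum_div]

lemma emp_eq (m t : ℝ) (n : ℕ) :
    Real.exp (t * n) * ppmf m n = Real.exp (-m) * ((m * Real.exp t) ^ n / n.factorial) := by
  unfold ppmf
  rw [mul_pow, ← Real.exp_nat_mul]
  rw [mul_comm (n:ℝ) t]
  ring

lemma summable_emp (m t : ℝ) : Summable (fun n : ℕ => Real.exp (t * n) * ppmf m n) := by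
  simp only [emp_eq]
  exact (Real.summable_pow_div_factorial (m * Real.exp t)).mul_left _

lemma tsum_emp (m t : ℝ) :
    ∑' n : ℕ, Real.exp (t * n) * ppmf m n = Real.exp (m * (Real.exp t - 1)) := by
  simp only [emp_eq]
  rw [tsum_mul_left, tsum_pow_div_factorial, ← Real.exp_add]
  ring_nf

lemma summable_ppmf (m : ℝ) : Summable (fun n : ℕ => ppmf m n) := by
  have h := summable_emp m 0
  simpa using h

lemma tsum_ppmf (m : ℝ) : ∑' n : ℕ, ppmf m n = 1 := by
  have h := tsum_emp m 0
  simpa using h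

lemma summable_ppmf_add (m : ℝ) (k : ℕ) : Summable (fun n : ℕ => ppmf m (n + k)) :=
  (summable_nat_add_iff k).2 (summable_ppmf m)

lemma head_add_tail (m : ℝ) (k : ℕ) :
    ∑ n ∈ Finset.range k, ppmf m n + ∑' n : ℕ, ppmf m (n + k) = 1 := by
  rw [Summable.sum_add_tsum_nat_add k (summable_ppmf m), tsum_ppmf]

lemma tail_le_one {m : ℝ} (hm : 0 ≤ m) (k : ℕ) : ∑' n : ℕ, ppmf m (n + k) ≤ 1 := by
  have h := head_add_tail m k
  have : 0 ≤ ∑ n ∈ Finset.range k, ppmf m n := Finset.sum_nonneg fun n _ => ppmf_nonneg hm n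
  linarith

lemma tail_chernoff {m t : ℝ} (hm : 0 ≤ m) (ht : 0 ≤ t) (k : ℕ) :
    ∑' n : ℕ, ppmf m (n + k) ≤ Real.exp (m * (Real.exp t - 1) - t * k) := by
  have h1 : ∀ n : ℕ, ppmf m (n + k) ≤ Real.exp (-(t * k)) * (Real.exp (t * (n + k)) * ppmf m (n + k)) := by
    intro n
    have h2 : (1:ℝ) ≤ Real.exp (-(t*k)) * Real.exp (t * (n + k)) := by
      rw [← Real.exp_add]
      have : (0:ℝ) ≤ -(t*k) + t*(n+k) := by
        have : (0:ℝ) ≤ t * n := mul_nonneg ht (Nat.cast_nonneg n)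
        push_cast; nlinarith
      calc (1:ℝ) = Real.exp 0 := Real.exp_zero.symm
        _ ≤ _ := Real.exp_le_exp.2 this
    calc ppmf m (n + k) = 1 * ppmf m (n + k) := (one_mul _).symm
      _ ≤ (Real.exp (-(t*k)) * Real.exp (t * (n + k))) * ppmf m (n + k) := by
          apply mul_le_mul_of_nonneg_right h2 (ppmf_nonneg hm _)
      _ = _ := by ring
  have hsum : Summable (fun n : ℕ => Real.exp (t * (n + k)) * ppmf m (n + k)) := by
    have := (summable_nat_add_iff (f := fun n : ℕ => Real.exp (t * n) * ppmf m n) k).2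
      (summable_emp m t)
    simpa using this
  have h3 : ∑' n : ℕ, ppmf m (n + k) ≤
      ∑' n : ℕ, Real.exp (-(t*k)) * (Real.exp (t * (n + k)) * ppmf m (n + k)) :=
    Summable.tsum_le_tsum h1 (summable_ppmf_add m k) (hsum.mul_left _)
  have h4 : ∑' n : ℕ, Real.exp (t * (n + k)) * ppmf m (n + k)
      ≤ ∑' n : ℕ, Real.exp (t * n) * ppmf m n := by
    have heq := Summable.sum_add_tsum_nat_add k (summable_emp m t)
    have hnn : 0 ≤ ∑ n ∈ Finset.range k, Real.exp (t * n) * ppmf m n :=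
      Finset.sum_nonneg fun n _ => mul_nonneg (Real.exp_nonneg _) (ppmf_nonneg hm n)
    push_cast at heq ⊢
    linarith
  calc ∑' n : ℕ, ppmf m (n + k) ≤ _ := h3
    _ = Real.exp (-(t*k)) * ∑' n : ℕ, Real.exp (t * (n + k)) * ppmf m (n + k) := tsum_mul_left
    _ ≤ Real.exp (-(t*k)) * ∑' n : ℕ, Real.exp (t * n) * ppmf m n := by
        apply mul_le_mul_of_nonneg_left h4 (Real.exp_nonneg _)
    _ = Real.exp (-(t*k)) * Real.exp (m * (Real.exp t - 1)) := by rw [tsum_emp]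
    _ = Real.exp (m * (Real.exp t - 1) - t * k) := by rw [← Real.exp_add]; ring_nf

lemma head_chernoff {m t : ℝ} (hm : 0 ≤ m) (ht : t ≤ 0) {k : ℕ} (hk : 1 ≤ k) :
    ∑ n ∈ Finset.range k, ppmf m n ≤ Real.exp (m * (Real.exp t - 1) - t * ((k:ℝ) - 1)) := by
  have h1 : ∀ n ∈ Finset.range k, ppmf m n ≤
      Real.exp (-(t * ((k:ℝ)-1))) * (Real.exp (t * n) * ppmf m n) := by
    intro n hn
    have hn' : (n:ℝ) ≤ (k:ℝ) - 1 := by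
      have := Finset.mem_range.1 hn
      have : (n:ℝ) + 1 ≤ (k:ℝ) := by exact_mod_cast this
      linarith
    have h2 : (1:ℝ) ≤ Real.exp (-(t*((k:ℝ)-1))) * Real.exp (t * n) := by
      rw [← Real.exp_add]
      have : (0:ℝ) ≤ -(t*((k:ℝ)-1)) + t*n := by nlinarith
      calc (1:ℝ) = Real.exp 0 := Real.exp_zero.symm
        _ ≤ _ := Real.exp_le_exp.2 this
    calc ppmf m n = 1 * ppmf m n := (one_mul _).symm
      _ ≤ (Real.exp (-(t*((k:ℝ)-1))) * Real.exp (t * n)) * ppmf m n :=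
          mul_le_mul_of_nonneg_right h2 (ppmf_nonneg hm _)
      _ = _ := by ring
  have h3 : ∑ n ∈ Finset.range k, Real.exp (-(t*((k:ℝ)-1))) * (Real.exp (t * n) * ppmf m n)
      ≤ Real.exp (-(t*((k:ℝ)-1))) * ∑' n : ℕ, Real.exp (t * n) * ppmf m n := by
    rw [← Finset.mul_sum]
    apply mul_le_mul_of_nonneg_left _ (Real.exp_nonneg _)
    exact Summable.sum_le_tsum _ (fun n _ => mul_nonneg (Real.exp_nonneg _) (ppmf_nonneg hm n)) (summable_emp m t)
  calc ∑ n ∈ Finset.range k, ppmf m n ≤ _ := Finset.sum_le_sum h1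
    _ ≤ Real.exp (-(t*((k:ℝ)-1))) * ∑' n : ℕ, Real.exp (t * n) * ppmf m n := h3
    _ = Real.exp (-(t*((k:ℝ)-1))) * Real.exp (m * (Real.exp t - 1)) := by rw [tsum_emp]
    _ = Real.exp (m * (Real.exp t - 1) - t * ((k:ℝ)-1)) := by rw [← Real.exp_add]; ring_nf



lemma exp_quad {t : ℝ} (h : |t| ≤ 1) : Real.exp t ≤ 1 + t + t^2 := by
  have hb := Real.exp_bound h (n := 2) (by norm_num)
  have h2 : ∑ m ∈ Finset.range 2, t ^ m / m.factorial = 1 + t := by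
    simp [Finset.sum_range_succ]
  rw [h2] at hb
  norm_num [Nat.factorial] at hb
  have := abs_le.1 hb
  nlinarith [sq_abs t, this.2]

lemma chern_exponent_upper {ε x m : ℝ} (hε : 0 < ε) (hε1 : ε ≤ 1) (hx : 0 ≤ x)
    (hm0 : 0 ≤ m) (hm : m ≤ (1 - ε) * x) {k : ℝ} (hk : x ≤ k) :
    m * (Real.exp (ε/3) - 1) - (ε/3) * k ≤ -(ε^2/6) * x := by
  obtain ⟨t, ht⟩ : ∃ t : ℝ, t = ε/3 := ⟨_, rfl⟩
  rw [← ht]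
  have htpos : 0 < t := by rw [ht]; positivity
  have ht1 : t ≤ 1 := by rw [ht]; linarith
  have hquad : Real.exp t ≤ 1 + t + t^2 := exp_quad (by rw [abs_of_pos htpos]; linarith)
  have hexp1 : 0 ≤ Real.exp t - 1 := by
    have := Real.add_one_le_exp t; linarith
  have h1 : m * (Real.exp t - 1) ≤ (1 - ε) * x * (Real.exp t - 1) :=
    mul_le_mul_of_nonneg_right hm hexp1
  have h2 : t * x ≤ t * k := by nlinarith
  have e2 : (1-ε)*x*(Real.exp t - 1) ≤ (1-ε)*x*(t+t^2) :=
    mul_le_mul_of_nonneg_left (by linarith) (mul_nonneg (by linarith) hx)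
  have e3 : (1-ε)*x*(t+t^2) - t*x = x*(t^2 - ε*t - ε*t^2) := by ring
  have e4 : x*(t^2 - ε*t - ε*t^2) ≤ x*(-(ε^2/6)) := by
    apply mul_le_mul_of_nonneg_left _ hx
    rw [ht]
    nlinarith [mul_nonneg (mul_nonneg hε.le hε.le) hε.le]
  linarith

lemma chern_exponent_lower {ε x m : ℝ} (hε : 0 < ε) (hε1 : ε ≤ 1) (hx : 0 ≤ x)
    (hm : (1 + ε) * x ≤ m) {k : ℝ} (hk0 : 0 ≤ k) (hk : k ≤ x) :
    m * (Real.exp (-(ε/6)) - 1) - (-(ε/6)) * k ≤ -(ε^2/12) * x := by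
  obtain ⟨t, ht⟩ : ∃ t : ℝ, t = -(ε/6) := ⟨_, rfl⟩
  rw [← ht]
  have htneg : t < 0 := by rw [ht]; simp; positivity
  have ht1 : -1 ≤ t := by rw [ht]; linarith
  have hquad : Real.exp t ≤ 1 + t + t^2 := exp_quad (by rw [abs_of_neg htneg]; linarith)
  have hexp1 : Real.exp t - 1 < 0 := by
    have : Real.exp t < Real.exp 0 := Real.exp_lt_exp.2 htneg
    rw [Real.exp_zero] at this; linarith
  have h1 : m * (Real.exp t - 1) ≤ (1 + ε) * x * (Real.exp t - 1) :=
    mul_le_mul_of_nonpos_right hm hexp1.le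
  have h2 : t * x ≤ t * k := by nlinarith
  have e2 : (1+ε)*x*(Real.exp t - 1) ≤ (1+ε)*x*(t+t^2) :=
    mul_le_mul_of_nonneg_left (by linarith) (mul_nonneg (by linarith) hx)
  have e3 : (1+ε)*x*(t+t^2) - t*x = x*(ε*t + t^2 + ε*t^2) := by ring
  have e4 : x*(ε*t + t^2 + ε*t^2) ≤ x*(-(ε^2/12)) := by
    apply mul_le_mul_of_nonneg_left _ hx
    rw [ht]
    nlinarith [mul_nonneg (mul_nonneg hε.le hε.le) hε.le]
  linarith
lemma tail_poly_lower {T : ℝ → ℝ} {l0 γ : ℝ} (hγ : 0 < γ) (hl0 : 0 < l0)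
    (hnn : ∀ x, 0 ≤ T x)
    (hmono : ∀ ⦃u v : ℝ⦄, u ≤ v → T v ≤ T u)
    (hstep : ∀ l, l0 ≤ l → (1/2:ℝ)^γ * T l ≤ T (2*l)) :
    ∀ x, l0 ≤ x → T l0 * (l0/(2*x))^γ ≤ T x := by
  have key : ∀ n : ℕ, ∀ x : ℝ, l0 ≤ x → x ≤ l0 * 2^n → T l0 * (l0/(2*x))^γ ≤ T x := by
    intro n
    induction n with
    | zero =>
      intro x h1 h2
      have hx : x = l0 := le_antisymm (by simpa using h2) h1
      rw [hx]
      have hc1 : (l0/(2*l0))^γ ≤ 1 := by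
        apply Real.rpow_le_one (by positivity) _ hγ.le
        rw [div_le_one (by positivity)]; linarith
      exact mul_le_of_le_one_right (hnn l0) hc1
    | succ n ih =>
      intro x h1 h2
      have hxpos : 0 < x := lt_of_lt_of_le hl0 h1
      by_cases hc : x ≤ 2 * l0
      · have h3 : T (2*l0) ≤ T x := hmono hc
        have h4 := hstep l0 le_rfl
        have h5 : (l0/(2*x))^γ ≤ (1/2:ℝ)^γ := by
          apply Real.rpow_le_rpow (by positivity) _ hγ.le
          rw [div_le_div_iff₀ (by positivity) (by norm_num)]
          linarith
        calc T l0 * (l0/(2*x))^γ ≤ T l0 * (1/2:ℝ)^γ :=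
              mul_le_mul_of_nonneg_left h5 (hnn l0)
          _ = (1/2:ℝ)^γ * T l0 := mul_comm _ _
          _ ≤ T (2*l0) := h4
          _ ≤ T x := h3
      · push_neg at hc
        have h1' : l0 ≤ x/2 := by linarith
        have h2' : x/2 ≤ l0 * 2^n := by
          rw [pow_succ] at h2; linarith
        have ih' := ih (x/2) h1' h2'
        have hstep' := hstep (x/2) h1'
        rw [show 2*(x/2) = x by ring] at hstep'
        have e : (1/2:ℝ)^γ * (l0/(2*(x/2)))^γ = (l0/(2*x))^γ := by
          rw [← Real.mul_rpow (by norm_num) (by positivity)]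
          congr 1
          field_simp
        calc T l0 * (l0/(2*x))^γ = (1/2:ℝ)^γ * (T l0 * (l0/(2*(x/2)))^γ) := by
              rw [← e]; ring
          _ ≤ (1/2:ℝ)^γ * T (x/2) :=
              mul_le_mul_of_nonneg_left ih' (Real.rpow_nonneg (by norm_num) _)
          _ ≤ T x := hstep'
  intro x hx
  obtain ⟨n, hn⟩ := pow_unbounded_of_one_lt (x/l0) (one_lt_two (α := ℝ))
  exact key n x hx (by rw [div_lt_iff₀ hl0] at hn; linarith [hn])

lemma exp_div_tendsto_zero {g : ℝ → ℝ} {C γ c : ℝ} (hC : 0 < C) (hc : 0 < c)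
    (hg : ∀ᶠ x in atTop, C * x ^ (-γ) ≤ g x) :
    Tendsto (fun x => Real.exp (-c * x) / g x) atTop (𝓝 0) := by
  have hgpos : ∀ᶠ x in atTop, 0 < g x := by
    filter_upwards [hg, eventually_gt_atTop 0] with x h hx
    exact lt_of_lt_of_le (by positivity) h
  apply squeeze_zero' (g := fun x => (x ^ γ * Real.exp (-c*x)) / C)
  · filter_upwards [hgpos] with x h
    positivity
  · filter_upwards [hg, eventually_gt_atTop 0] with x h hx
    have h1 : 0 < C * x ^ (-γ) := by positivity
    have h2 : Real.exp (-c*x) / g x ≤ Real.exp (-c*x) / (C * x^(-γ)) :=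
      div_le_div_of_nonneg_left (Real.exp_nonneg _) (by positivity) h
    have h3 : Real.exp (-c*x) / (C * x^(-γ)) = (x ^ γ * Real.exp (-c*x)) / C := by
      rw [Real.rpow_neg hx.le]
      have hxγ : x ^ γ ≠ 0 := ne_of_gt (Real.rpow_pos_of_pos hx γ)
      field_simp
    rw [h3] at h2
    exact h2
  · have h := tendsto_rpow_mul_exp_neg_mul_atTop_nhds_zero γ c hc
    simpa using h.div_const C

lemma ppmf_le_one {m : ℝ} (hm : 0 ≤ m) (n : ℕ) : ppmf m n ≤ 1 := by
  rw [← tsum_ppmf m]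
  exact Summable.le_tsum (summable_ppmf m) n (fun j _ => ppmf_nonneg hm j)

section Meas
variable {Ω : Type*} [MeasureSpace Ω] [IsProbabilityMeasure (ℙ : Measure Ω)]
  (N : Ω → ℕ) (hN : Measurable N)
  (Λ : Ω → ℝ) (hΛ : Measurable Λ) (hΛpos : 0 ≤ᵐ[ℙ] Λ)
  (β : ℝ) (hβ : 0 < β)
  (hmixed : ∀ n : ℕ, (ℙ {ω | N ω = n}).toReal
      = ∫ ω, Real.exp (-(β * Λ ω)) * (β * Λ ω) ^ n / n.factorial ∂ℙ)

include hN hΛ hΛpos hβ hmixed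

lemma singleton_eq_lintegral (j : ℕ) :
    ℙ {ω | N ω = j} = ∫⁻ ω, ENNReal.ofReal (ppmf (β * Λ ω) j) ∂ℙ := by
  have hmeas : Measurable (fun ω => Real.exp (-(β * Λ ω)) * (β * Λ ω) ^ j / j.factorial) := by
    have h1 : Measurable (fun ω => β * Λ ω) := hΛ.const_mul β
    exact ((h1.neg.exp.mul (h1.pow_const j)).div_const _)
  have hnn : ∀ᵐ ω ∂ℙ, 0 ≤ Real.exp (-(β * Λ ω)) * (β * Λ ω) ^ j / j.factorial := by
    filter_upwards [hΛpos] with ω hω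
    have : 0 ≤ β * Λ ω := mul_nonneg hβ.le hω
    positivity
  have hbdd : ∀ᵐ ω ∂ℙ, ‖Real.exp (-(β * Λ ω)) * (β * Λ ω) ^ j / j.factorial‖ ≤ 1 := by
    filter_upwards [hΛpos] with ω hω
    have h0 : 0 ≤ β * Λ ω := mul_nonneg hβ.le hω
    have h1 : (0:ℝ) ≤ Real.exp (-(β * Λ ω)) * (β * Λ ω) ^ j / j.factorial := by positivity
    rw [Real.norm_eq_abs, abs_of_nonneg h1]
    exact ppmf_le_one h0 j
  have hint : Integrable (fun ω => Real.exp (-(β * Λ ω)) * (β * Λ ω) ^ j / j.factorial) ℙ := by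
    apply Integrable.mono' (integrable_const (1:ℝ)) hmeas.aestronglyMeasurable hbdd
  have h2 : ℙ {ω | N ω = j} = ENNReal.ofReal ((ℙ {ω | N ω = j}).toReal) := by
    rw [ENNReal.ofReal_toReal (measure_ne_top _ _)]
  rw [h2, hmixed j, MeasureTheory.ofReal_integral_eq_lintegral_ofReal hint hnn]
  rfl

lemma tail_eq_lintegral (x : ℝ) (hx : 0 ≤ x) :
    ℙ {ω | x < (N ω : ℝ)} =
      ∫⁻ ω, ∑' n : ℕ, ENNReal.ofReal (ppmf (β * Λ ω) (n + (⌊x⌋₊ + 1))) ∂ℙ := by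
  set k := ⌊x⌋₊ + 1 with hk
  have hset : {ω | x < (N ω : ℝ)} = ⋃ n : ℕ, {ω | N ω = n + k} := by
    ext ω
    simp only [Set.mem_setOf_eq, Set.mem_iUnion]
    constructor
    · intro h
      have h1 : ⌊x⌋₊ < N ω := (Nat.floor_lt hx).2 h
      have h2 : k ≤ N ω := h1
      exact ⟨N ω - k, (Nat.sub_add_cancel h2).symm⟩
    · rintro ⟨n, hn⟩
      have h1 : x < (k : ℝ) := by
        rw [hk]; push_cast
        exact Nat.lt_floor_add_one x
      have h2 : (k : ℝ) ≤ (N ω : ℝ) := by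
        rw [hn]; push_cast; linarith [Nat.cast_nonneg (α := ℝ) n]
      linarith
    -- done
  rw [hset, measure_iUnion ?_ ?_]
  · have hstep : ∀ n : ℕ, ℙ {ω | N ω = n + k}
        = ∫⁻ ω, ENNReal.ofReal (ppmf (β * Λ ω) (n + k)) ∂ℙ :=
      fun n => singleton_eq_lintegral N hN Λ hΛ hΛpos β hβ hmixed (n + k)
    rw [tsum_congr hstep, lintegral_tsum]
    · intro n
      apply Measurable.aemeasurable
      apply Measurable.ennreal_ofReal
      have h1 : Measurable (fun ω => β * Λ ω) := hΛ.const_mul β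
      exact ((h1.neg.exp.mul (h1.pow_const (n+k))).div_const _)
  · intro i j hij
    simp only [Function.onFun, Set.disjoint_left]
    intro ω hi hj
    simp only [Set.mem_setOf_eq] at hi hj
    omega
  · intro n
    exact hN (measurableSet_singleton (n + k))



lemma tail_upper_bound (x ε : ℝ) (hx : 0 ≤ x) (hε : 0 < ε) (hε1 : ε ≤ 1) :
    (ℙ {ω | x < (N ω : ℝ)}).toReal ≤
      Real.exp (-(ε^2/6) * x) + (ℙ {ω | (1-ε)*x/β < Λ ω}).toReal := by
  have hkey := tail_eq_lintegral N hN Λ hΛ hΛpos β hβ hmixed x hx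
  set k := ⌊x⌋₊ + 1 with hkdef
  set a := (1-ε)*x/β with hadef
  set e₁ := Real.exp (-(ε^2/6) * x) with he₁
  have hsetmeas : MeasurableSet {ω | a < Λ ω} := hΛ measurableSet_Ioi
  have hxk : x ≤ (k : ℝ) := by
    rw [hkdef]; push_cast; exact (Nat.lt_floor_add_one x).le
  have hbound : ℙ {ω | x < (N ω : ℝ)} ≤ ENNReal.ofReal e₁ + ℙ {ω | a < Λ ω} := by
    rw [hkey]
    have hmono : ∀ᵐ ω ∂ℙ, (∑' n : ℕ, ENNReal.ofReal (ppmf (β * Λ ω) (n + k)))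
        ≤ ENNReal.ofReal e₁ + Set.indicator {ω | a < Λ ω} (fun _ => 1) ω := by
      filter_upwards [hΛpos] with ω hω
      have hm0 : 0 ≤ β * Λ ω := mul_nonneg hβ.le hω
      have htsum_eq : (∑' n : ℕ, ENNReal.ofReal (ppmf (β * Λ ω) (n + k)))
          = ENNReal.ofReal (∑' n : ℕ, ppmf (β * Λ ω) (n + k)) :=
        (ENNReal.ofReal_tsum_of_nonneg (fun n => ppmf_nonneg hm0 _)
          (summable_ppmf_add _ k)).symm
      by_cases hcase : Λ ω ≤ a
      · have hmle : β * Λ ω ≤ (1-ε) * x := by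
          have := mul_le_mul_of_nonneg_left hcase hβ.le
          calc β * Λ ω ≤ β * a := this
            _ = (1-ε)*x := by rw [hadef]; field_simp
        have hch : ∑' n : ℕ, ppmf (β * Λ ω) (n + k) ≤ e₁ := by
          calc ∑' n : ℕ, ppmf (β * Λ ω) (n + k)
              ≤ Real.exp ((β * Λ ω) * (Real.exp (ε/3) - 1) - (ε/3) * k) :=
                tail_chernoff hm0 (by positivity) k
            _ ≤ e₁ := by
                rw [he₁]
                exact Real.exp_le_exp.2
                  (chern_exponent_upper hε hε1 hx hm0 hmle hxk)
        rw [htsum_eq]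
        exact le_add_right (ENNReal.ofReal_le_ofReal hch)
      · have h1 : (∑' n : ℕ, ENNReal.ofReal (ppmf (β * Λ ω) (n + k))) ≤ 1 := by
          rw [htsum_eq]
          calc ENNReal.ofReal (∑' n : ℕ, ppmf (β * Λ ω) (n + k))
              ≤ ENNReal.ofReal 1 := ENNReal.ofReal_le_ofReal (tail_le_one hm0 k)
            _ = 1 := ENNReal.ofReal_one
        have h2 : Set.indicator {ω | a < Λ ω} (fun _ => (1:ℝ≥0∞)) ω = 1 :=
          Set.indicator_of_mem (by simpa using lt_of_not_ge hcase) _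
        rw [h2]
        exact h1.trans le_add_self
    calc ∫⁻ ω, (∑' n : ℕ, ENNReal.ofReal (ppmf (β * Λ ω) (n + k))) ∂ℙ
        ≤ ∫⁻ ω, (ENNReal.ofReal e₁ + Set.indicator {ω | a < Λ ω} (fun _ => 1) ω) ∂ℙ :=
          lintegral_mono_ae hmono
      _ = ENNReal.ofReal e₁ + ℙ {ω | a < Λ ω} := by
          rw [lintegral_add_left measurable_const, lintegral_const,
            lintegral_indicator_const hsetmeas, measure_univ, mul_one, one_mul]
  have hne : ENNReal.ofReal e₁ + ℙ {ω | a < Λ ω} ≠ ⊤ :=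
    ENNReal.add_ne_top.2 ⟨ENNReal.ofReal_ne_top, measure_ne_top _ _⟩
  have := ENNReal.toReal_mono hne hbound
  rwa [ENNReal.toReal_add ENNReal.ofReal_ne_top (measure_ne_top _ _),
    ENNReal.toReal_ofReal (Real.exp_nonneg _)] at this

lemma tail_lower_bound (x ε : ℝ) (hx : 0 ≤ x) (hε : 0 < ε) (hε1 : ε ≤ 1) :
    (1 - Real.exp (-(ε^2/12) * x)) * (ℙ {ω | (1+ε)*x/β < Λ ω}).toReal
      ≤ (ℙ {ω | x < (N ω : ℝ)}).toReal := by
  set e₂ := Real.exp (-(ε^2/12) * x) with he₂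
  by_cases hsgn : 0 ≤ 1 - e₂
  swap
  · have h1 : (1 - e₂) * (ℙ {ω | (1+ε)*x/β < Λ ω}).toReal ≤ 0 :=
      mul_nonpos_of_nonpos_of_nonneg (by linarith [not_le.1 hsgn]) ENNReal.toReal_nonneg
    exact h1.trans ENNReal.toReal_nonneg
  have hkey := tail_eq_lintegral N hN Λ hΛ hΛpos β hβ hmixed x hx
  set k := ⌊x⌋₊ + 1 with hkdef
  set b := (1+ε)*x/β with hbdef
  have hsetmeas : MeasurableSet {ω | b < Λ ω} := hΛ measurableSet_Ioi
  have hbound : ENNReal.ofReal (1 - e₂) * ℙ {ω | b < Λ ω} ≤ ℙ {ω | x < (N ω : ℝ)} := by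
    rw [hkey]
    have hmono : ∀ᵐ ω ∂ℙ, Set.indicator {ω | b < Λ ω} (fun _ => ENNReal.ofReal (1 - e₂)) ω
        ≤ (∑' n : ℕ, ENNReal.ofReal (ppmf (β * Λ ω) (n + k))) := by
      filter_upwards [hΛpos] with ω hω
      by_cases hcase : b < Λ ω
      swap
      · rw [Set.indicator_of_notMem (by simpa using hcase)]
        exact zero_le
      have hm0 : 0 ≤ β * Λ ω := mul_nonneg hβ.le hω
      have htsum_eq : (∑' n : ℕ, ENNReal.ofReal (ppmf (β * Λ ω) (n + k)))
          = ENNReal.ofReal (∑' n : ℕ, ppmf (β * Λ ω) (n + k)) :=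
        (ENNReal.ofReal_tsum_of_nonneg (fun n => ppmf_nonneg hm0 _)
          (summable_ppmf_add _ k)).symm
      rw [Set.indicator_of_mem (by simpa using hcase), htsum_eq]
      apply ENNReal.ofReal_le_ofReal
      have hmge : (1+ε) * x ≤ β * Λ ω := by
        have h1 : β * b ≤ β * Λ ω := mul_le_mul_of_nonneg_left hcase.le hβ.le
        calc (1+ε)*x = β * b := by rw [hbdef]; field_simp
          _ ≤ β * Λ ω := h1
      have hhead : ∑ n ∈ Finset.range k, ppmf (β * Λ ω) n ≤ e₂ := by
        calc ∑ n ∈ Finset.range k, ppmf (β * Λ ω) n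
            ≤ Real.exp ((β * Λ ω) * (Real.exp (-(ε/6)) - 1) - (-(ε/6)) * ((k:ℝ) - 1)) :=
              head_chernoff hm0 (by simp; positivity) (Nat.le_add_left 1 ⌊x⌋₊)
          _ ≤ e₂ := by
              rw [he₂]
              apply Real.exp_le_exp.2
              have hk1 : (k:ℝ) - 1 = (⌊x⌋₊ : ℝ) := by rw [hkdef]; push_cast; ring
              rw [hk1]
              exact chern_exponent_lower hε hε1 hx hmge (Nat.cast_nonneg _) (Nat.floor_le hx)
      have := head_add_tail (β * Λ ω) k
      linarith
    calc ENNReal.ofReal (1 - e₂) * ℙ {ω | b < Λ ω}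
        = ∫⁻ ω, Set.indicator {ω | b < Λ ω} (fun _ => ENNReal.ofReal (1 - e₂)) ω ∂ℙ := by
          rw [lintegral_indicator_const hsetmeas]
      _ ≤ _ := lintegral_mono_ae hmono
  have := ENNReal.toReal_mono (measure_ne_top _ _) hbound
  rwa [ENNReal.toReal_mul, ENNReal.toReal_ofReal hsgn] at this


end Meas

set_option maxHeartbeats 1000000 in
/-- Earthquake insurance example: if `N` is mixed Poisson with random mean `βΛ` and
`P[Λ > λ] = λ^{-α} L(λ)` with `L` slowly varying, then
`P[N > x] ~ P[Λ > x/β] = (x/β)^{-α} L(x/β)` as `x → ∞`. -/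
theorem mixed_poisson_regularly_varying_tail
    {Ω : Type*} [MeasureSpace Ω] [IsProbabilityMeasure (ℙ : Measure Ω)]
    (N : Ω → ℕ) (hN : Measurable N)
    (Λ : Ω → ℝ) (hΛ : Measurable Λ) (hΛpos : 0 ≤ᵐ[ℙ] Λ)
    (β : ℝ) (hβ : 0 < β)
    -- conditionally on `Λ = λ`, `N` is Poisson with mean `βλ`
    (hmixed : ∀ n : ℕ, (ℙ {ω | N ω = n}).toReal
        = ∫ ω, Real.exp (-(β * Λ ω)) * (β * Λ ω) ^ n / n.factorial ∂ℙ)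
    -- Gutenberg–Richter law: `P[Λ > λ] = λ^{-α} L(λ)` with `L` slowly varying
    (α : ℝ) (hα : 0 < α)
    (L : ℝ → ℝ) (hLpos : ∀ᶠ x in atTop, 0 < L x)
    (hL : ∀ y : ℝ, 0 < y → Tendsto (fun x : ℝ => L (x * y) / L x) atTop (𝓝 1))
    (htailΛ : ∀ l : ℝ, 0 < l → (ℙ {ω | l < Λ ω}).toReal = l ^ (-α) * L l) :
    Tendsto (fun x : ℝ =>
        (ℙ {ω | x < (N ω : ℝ)}).toReal / ((x / β) ^ (-α) * L (x / β)))
      atTop (𝓝 1) := by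
  classical
  have hβtop : Tendsto (fun x : ℝ => x / β) atTop atTop :=
    Tendsto.atTop_div_const hβ tendsto_id
  -- monotonicity and bounds for the tail of Λ
  have hTmono : ∀ ⦃u v : ℝ⦄, u ≤ v →
      (ℙ {ω | v < Λ ω}).toReal ≤ (ℙ {ω | u < Λ ω}).toReal := by
    intro u v huv
    apply ENNReal.toReal_mono (measure_ne_top _ _)
    apply measure_mono
    intro ω hω
    exact lt_of_le_of_lt huv hω
  have hTnn : ∀ l : ℝ, 0 ≤ (ℙ {ω | l < Λ ω}).toReal := fun l => ENNReal.toReal_nonneg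
  have hT1 : ∀ l : ℝ, (ℙ {ω | l < Λ ω}).toReal ≤ 1 := by
    intro l
    rw [← ENNReal.toReal_one]
    exact ENNReal.toReal_mono one_ne_top prob_le_one
  -- the doubling step for the tail
  have hstepEv : ∀ᶠ l in atTop, (1/2:ℝ)^(α+1) * (ℙ {ω | l < Λ ω}).toReal
      ≤ (ℙ {ω | 2*l < Λ ω}).toReal := by
    have h2 := (hL 2 two_pos).eventually (eventually_gt_nhds (show (1/2:ℝ) < 1 by norm_num))
    filter_upwards [h2, hLpos, eventually_gt_atTop 0] with l hr hLl hl
    have hL2 : L l / 2 ≤ L (l*2) := by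
      have := (lt_div_iff₀ hLl).1 hr
      linarith
    rw [htailΛ l hl, htailΛ (2*l) (by positivity), show (2:ℝ)*l = l*2 by ring,
      Real.mul_rpow hl.le (by norm_num)]
    have hhalf : ((1:ℝ)/2)^(α+1) = 2^(-α) / 2 := by
      rw [show (1:ℝ)/2 = 2⁻¹ by norm_num, Real.inv_rpow (by norm_num),
        ← Real.rpow_neg (by norm_num), show -(α+1) = -α + (-1) by ring,
        Real.rpow_add two_pos, Real.rpow_neg_one]
      ring
    rw [hhalf]
    calc 2^(-α)/2 * (l^(-α) * L l) = (l^(-α) * 2^(-α)) * (L l / 2) := by ring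
      _ ≤ (l^(-α) * 2^(-α)) * L (l*2) := by
          apply mul_le_mul_of_nonneg_left hL2 (by positivity)
      _ = l^(-α) * 2^(-α) * L (l*2) := by ring
  obtain ⟨l1, hl1⟩ := eventually_atTop.1 (hstepEv.and hLpos)
  obtain ⟨l0, hl01, hl0l1⟩ : ∃ l0 : ℝ, 1 ≤ l0 ∧ l1 ≤ l0 := ⟨max l1 1, le_max_right _ _, le_max_left _ _⟩
  have hl0pos : 0 < l0 := lt_of_lt_of_le one_pos hl01
  have hTl0pos : 0 < (ℙ {ω | l0 < Λ ω}).toReal := by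
    rw [htailΛ l0 hl0pos]
    have hLl0 : 0 < L l0 := (hl1 l0 hl0l1).2
    positivity
  have hpoly := tail_poly_lower (T := fun l => (ℙ {ω | l < Λ ω}).toReal)
    (l0 := l0) (γ := α+1) (by linarith) hl0pos hTnn hTmono
    (fun l hl => (hl1 l (le_trans hl0l1 hl)).1)
  -- denominator facts
  have hDeq : ∀ᶠ x in atTop, (x/β)^(-α) * L (x/β) = (ℙ {ω | x/β < Λ ω}).toReal := by
    filter_upwards [eventually_gt_atTop 0] with x hx
    exact (htailΛ (x/β) (by positivity)).symm
  have hDpos : ∀ᶠ x in atTop, 0 < (x/β)^(-α) * L (x/β) := by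
    filter_upwards [eventually_gt_atTop 0, hβtop.eventually hLpos] with x hx hLx
    positivity
  have hDlow : ∀ᶠ x in atTop,
      ((ℙ {ω | l0 < Λ ω}).toReal * (l0/2)^(α+1) * β^(α+1)) * x^(-(α+1))
        ≤ (x/β)^(-α) * L (x/β) := by
    filter_upwards [hDeq, eventually_ge_atTop (max (β*l0) 1)] with x hDx hx
    have hx1 : (1:ℝ) ≤ x := le_trans (le_max_right _ _) hx
    have hx0 : (0:ℝ) < x := by linarith
    have hxb : l0 ≤ x/β := by
      rw [le_div_iff₀ hβ]
      calc l0 * β = β * l0 := mul_comm _ _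
        _ ≤ x := le_trans (le_max_left _ _) hx
    have h := hpoly (x/β) hxb
    rw [hDx]
    refine le_trans (le_of_eq ?_) h
    have e1 : l0/(2*(x/β)) = (l0/2) * (β * x⁻¹) := by field_simp
    rw [e1, Real.mul_rpow (by positivity) (by positivity),
      Real.mul_rpow (by positivity) (by positivity),
      Real.inv_rpow hx0.le, ← Real.rpow_neg hx0.le]
    ring
  have hC'pos : 0 < (ℙ {ω | l0 < Λ ω}).toReal * (l0/2)^(α+1) * β^(α+1) := by positivity
  have hexp : ∀ c0 : ℝ, 0 < c0 →
      Tendsto (fun x => Real.exp (-c0*x) / ((x/β)^(-α) * L (x/β))) atTop (𝓝 0) :=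
    fun c0 hc0 => exp_div_tendsto_zero hC'pos hc0 hDlow
  -- ratio limits
  have hratio : ∀ y : ℝ, 0 < y →
      Tendsto (fun x => (ℙ {ω | y*x/β < Λ ω}).toReal / ((x/β)^(-α) * L (x/β)))
        atTop (𝓝 (y^(-α))) := by
    intro y hy
    have hLlim : Tendsto (fun x => L ((x/β)*y) / L (x/β)) atTop (𝓝 1) := (hL y hy).comp hβtop
    have hlim : Tendsto (fun x => y^(-α) * (L ((x/β)*y) / L (x/β))) atTop (𝓝 (y^(-α))) := by
      have := tendsto_const_nhds (x := (y^(-α) : ℝ)) (f := atTop (α := ℝ)) |>.mul hLlim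
      simpa using this
    apply Tendsto.congr' _ hlim
    filter_upwards [eventually_gt_atTop 0, hβtop.eventually hLpos] with x hx hLx
    have hu : 0 < x/β := by positivity
    have h1 : (ℙ {ω | y*x/β < Λ ω}).toReal = ((x/β)*y)^(-α) * L ((x/β)*y) := by
      rw [show y*x/β = (x/β)*y by ring]
      exact htailΛ _ (by positivity)
    rw [h1, Real.mul_rpow hu.le hy.le]
    have hne1 : (x/β)^(-α) ≠ 0 := ne_of_gt (Real.rpow_pos_of_pos hu _)
    field_simp
  rw [tendsto_order]
  constructor
  · -- lower: ∀ c < 1, eventually c < ratio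
    intro c hc
    have hcont : Tendsto (fun ε : ℝ => ((1:ℝ)+ε)^(-α)) (𝓝 0) (𝓝 1) := by
      have h1 : ContinuousAt (fun y : ℝ => y ^ (-α)) 1 :=
        Real.continuousAt_rpow_const 1 (-α) (Or.inl one_ne_zero)
      have h2 : Tendsto (fun ε : ℝ => (1:ℝ)+ε) (𝓝 0) (𝓝 1) :=
        Continuous.tendsto' (by continuity) 0 1 (by norm_num)
      have h3 := h1.tendsto.comp h2
      simpa [Real.one_rpow, Function.comp_def] using h3
    have hev : ∀ᶠ ε in 𝓝[>] (0:ℝ), (c < (1+ε)^(-α) ∧ ε < 1) :=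
      (eventually_nhdsWithin_of_eventually_nhds (hcont.eventually (eventually_gt_nhds hc))).and
        (eventually_nhdsWithin_of_eventually_nhds (eventually_lt_nhds one_pos))
    obtain ⟨ε, ⟨hεc, hε1⟩, hεpos⟩ := (hev.and eventually_mem_nhdsWithin).exists
    rw [Set.mem_Ioi] at hεpos
    have hVlim : Tendsto (fun x =>
        (ℙ {ω | (1+ε)*x/β < Λ ω}).toReal / ((x/β)^(-α) * L (x/β))
          - Real.exp (-(ε^2/12)*x) / ((x/β)^(-α) * L (x/β))) atTop (𝓝 ((1+ε)^(-α) - 0)) :=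
      (hratio (1+ε) (by linarith)).sub (hexp (ε^2/12) (by positivity))
    have hVev := hVlim.eventually (eventually_gt_nhds (by simpa using hεc))
    filter_upwards [hVev, hDpos, eventually_ge_atTop 0] with x hV hD hx
    have hlb := tail_lower_bound N hN Λ hΛ hΛpos β hβ hmixed x ε hx hεpos hε1.le
    have hTb1 : (ℙ {ω | (1+ε)*x/β < Λ ω}).toReal ≤ 1 := hT1 _
    have hEnn : (0:ℝ) ≤ Real.exp (-(ε^2/12)*x) := Real.exp_nonneg _
    have hET : Real.exp (-(ε^2/12)*x) * (ℙ {ω | (1+ε)*x/β < Λ ω}).toReal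
        ≤ Real.exp (-(ε^2/12)*x) := mul_le_of_le_one_right hEnn hTb1
    have hsub : (ℙ {ω | (1+ε)*x/β < Λ ω}).toReal - Real.exp (-(ε^2/12)*x)
        ≤ (ℙ {ω | x < (N ω : ℝ)}).toReal := by nlinarith [hTnn ((1+ε)*x/β)]
    have hdiv : ((ℙ {ω | (1+ε)*x/β < Λ ω}).toReal - Real.exp (-(ε^2/12)*x))
        / ((x/β)^(-α) * L (x/β))
        ≤ (ℙ {ω | x < (N ω : ℝ)}).toReal / ((x/β)^(-α) * L (x/β)) :=
      (div_le_div_iff_of_pos_right hD).mpr hsub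
    rw [sub_div] at hdiv
    exact lt_of_lt_of_le hV hdiv
  · -- upper: ∀ c > 1, eventually ratio < c
    intro c hc
    have hcont : Tendsto (fun ε : ℝ => ((1:ℝ)-ε)^(-α)) (𝓝 0) (𝓝 1) := by
      have h1 : ContinuousAt (fun y : ℝ => y ^ (-α)) 1 :=
        Real.continuousAt_rpow_const 1 (-α) (Or.inl one_ne_zero)
      have h2 : Tendsto (fun ε : ℝ => (1:ℝ)-ε) (𝓝 0) (𝓝 1) :=
        Continuous.tendsto' (by continuity) 0 1 (by norm_num)
      have h3 := h1.tendsto.comp h2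
      simpa [Real.one_rpow, Function.comp_def] using h3
    have hev : ∀ᶠ ε in 𝓝[>] (0:ℝ), ((1-ε)^(-α) < c ∧ ε < 1) :=
      (eventually_nhdsWithin_of_eventually_nhds (hcont.eventually (eventually_lt_nhds hc))).and
        (eventually_nhdsWithin_of_eventually_nhds (eventually_lt_nhds one_pos))
    obtain ⟨ε, ⟨hεc, hε1⟩, hεpos⟩ := (hev.and eventually_mem_nhdsWithin).exists
    rw [Set.mem_Ioi] at hεpos
    have hUlim : Tendsto (fun x =>
        (ℙ {ω | (1-ε)*x/β < Λ ω}).toReal / ((x/β)^(-α) * L (x/β))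
          + Real.exp (-(ε^2/6)*x) / ((x/β)^(-α) * L (x/β))) atTop (𝓝 ((1-ε)^(-α) + 0)) :=
      (hratio (1-ε) (by linarith)).add (hexp (ε^2/6) (by positivity))
    have hUev := hUlim.eventually (eventually_lt_nhds (by simpa using hεc))
    filter_upwards [hUev, hDpos, eventually_ge_atTop 0] with x hU hD hx
    have hub := tail_upper_bound N hN Λ hΛ hΛpos β hβ hmixed x ε hx hεpos hε1.le
    have hdiv : (ℙ {ω | x < (N ω : ℝ)}).toReal / ((x/β)^(-α) * L (x/β))
        ≤ (Real.exp (-(ε^2/6)*x) + (ℙ {ω | (1-ε)*x/β < Λ ω}).toReal)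
          / ((x/β)^(-α) * L (x/β)) :=
      (div_le_div_iff_of_pos_right hD).mpr hub
    rw [add_div] at hdiv
    exact lt_of_le_of_lt (hdiv.trans (le_of_eq (by ring))) hU
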